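/- arXiv:1808.09264 — 2 statements merged into one kernel-verified Lean document; each statement's English description precedes it below -/
import Mathlib

section
/- For every nonnegative integer w, there exists a polynomial Q with rational (equivalently real) coefficients of degree exactly 2w (for w ≥ 1; degree 0 for w = 0) such that for every integer n ≥ w, Q(n) equals the unsigned Stirling number of the first kind [n, n−w]. In other words, n ↦ [n, n−w] is a polynomial function of n of degree 2w. -/
/-- The unsigned Stirling number of the first kind `[n, k]`, defined as the coefficient of
`x^k` in the ascending factorial `x (x+1) ⋯ (x+n-1)`. -/
noncomputable def stirling1 (n k : ℕ) : ℕ := (ascPochhammer ℕ n).coeff k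

lemma stirling1_self (n : ℕ) : stirling1 n n = 1 := by
  unfold stirling1
  have h := (monic_ascPochhammer ℕ n).coeff_natDegree
  rwa [ascPochhammer_natDegree] at h

lemma stirling1_succ (n k : ℕ) :
    stirling1 (n+1) (k+1) = stirling1 n k + n * stirling1 n (k+1) := by
  unfold stirling1
  rw [ascPochhammer_succ_right, mul_add, Polynomial.coeff_add, Polynomial.coeff_mul_X,
    ← Polynomial.C_eq_natCast, Polynomial.coeff_mul_C, mul_comm]
  simp

lemma desc_diff (k : ℕ) (x : ℚ) :
    (descPochhammer ℚ (k+1)).eval (x+1)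
      = (descPochhammer ℚ (k+1)).eval x + (k+1) * (descPochhammer ℚ k).eval x := by
  have h1 : (descPochhammer ℚ (k+1)).eval (x+1) = (x+1) * (descPochhammer ℚ k).eval x := by
    rw [descPochhammer_succ_left]
    simp [Polynomial.eval_comp]
  rw [h1, descPochhammer_succ_eval]
  ring

lemma exists_sum_poly (d : ℕ) : ∀ p : Polynomial ℚ, p.degree ≤ (d : ℕ) →
    ∃ q : Polynomial ℚ, q.degree ≤ ((d + 1 : ℕ) : WithBot ℕ) ∧
      q.coeff (d+1) = p.coeff d / ((d : ℚ) + 1) ∧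
      ∀ x : ℚ, q.eval (x+1) = q.eval x + p.eval x := by
  induction d with
  | zero =>
    intro p hp
    refine ⟨Polynomial.C (p.coeff 0) * Polynomial.X, ?_, ?_, ?_⟩
    · calc (Polynomial.C (p.coeff 0) * Polynomial.X).degree
          ≤ (Polynomial.C (p.coeff 0)).degree + Polynomial.X.degree := Polynomial.degree_mul_le _ _
        _ ≤ 0 + 1 := by
            exact add_le_add Polynomial.degree_C_le (le_of_eq (Polynomial.degree_X))
        _ = ((0 + 1 : ℕ) : WithBot ℕ) := by norm_num
    · simp
    · intro x
      have hpC : p = Polynomial.C (p.coeff 0) := Polynomial.eq_C_of_degree_le_zero (by exact_mod_cast hp)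
      rw [hpC]
      simp; ring
  | succ d ih =>
    intro p hp
    set a := p.coeff (d+1) with ha
    set r := p - Polynomial.C a * descPochhammer ℚ (d+1) with hr
    have hEmonic := monic_descPochhammer ℚ (d+1)
    have hEdeg : (descPochhammer ℚ (d+1)).natDegree = d+1 := descPochhammer_natDegree ℚ (d+1)
    have hEcoeff : (descPochhammer ℚ (d+1)).coeff (d+1) = 1 := by
      have := hEmonic.coeff_natDegree; rwa [hEdeg] at this
    have hCE : (Polynomial.C a * descPochhammer ℚ (d+1)).degree ≤ ((d+1 : ℕ) : WithBot ℕ) := by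
      calc (Polynomial.C a * descPochhammer ℚ (d+1)).degree
          ≤ (Polynomial.C a).degree + (descPochhammer ℚ (d+1)).degree := Polynomial.degree_mul_le _ _
        _ ≤ 0 + ((d+1 : ℕ) : WithBot ℕ) := add_le_add Polynomial.degree_C_le
            (Polynomial.degree_le_natDegree.trans (le_of_eq (by rw [hEdeg])))
        _ = ((d+1 : ℕ) : WithBot ℕ) := zero_add _
    have hrdeg : r.degree ≤ (d : ℕ) := by
      rw [Polynomial.degree_le_iff_coeff_zero]
      intro m hm
      have hm' : d < m := by exact_mod_cast hm
      rcases eq_or_lt_of_le (Nat.succ_le_of_lt hm') with h | h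
      · rw [hr]
        simp only [Polynomial.coeff_sub, Polynomial.coeff_C_mul]
        rw [← h, hEcoeff, ← ha]; ring
      · have h1 : p.coeff m = 0 := Polynomial.coeff_eq_zero_of_degree_lt
          (lt_of_le_of_lt hp (by exact_mod_cast h))
        have h2 : (Polynomial.C a * descPochhammer ℚ (d+1)).coeff m = 0 :=
          Polynomial.coeff_eq_zero_of_degree_lt (lt_of_le_of_lt hCE (by exact_mod_cast h))
        rw [hr]; simp [h1, h2]
    obtain ⟨q₀, hq₀deg, _, hq₀⟩ := ih r hrdeg
    have hE2deg : (descPochhammer ℚ (d+2)).natDegree = d+2 := descPochhammer_natDegree ℚ (d+2)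
    have hE2coeff : (descPochhammer ℚ (d+2)).coeff (d+2) = 1 := by
      have := (monic_descPochhammer ℚ (d+2)).coeff_natDegree; rwa [hE2deg] at this
    refine ⟨Polynomial.C (a / ((d : ℚ) + 2)) * descPochhammer ℚ (d+2) + q₀, ?_, ?_, ?_⟩
    · apply Polynomial.degree_add_le _ _ |>.trans
      apply max_le
      · calc (Polynomial.C (a / ((d : ℚ) + 2)) * descPochhammer ℚ (d+2)).degree
            ≤ (Polynomial.C (a / ((d : ℚ) + 2))).degree + (descPochhammer ℚ (d+2)).degree :=
              Polynomial.degree_mul_le _ _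
          _ ≤ 0 + ((d+2 : ℕ) : WithBot ℕ) := add_le_add Polynomial.degree_C_le
              (Polynomial.degree_le_natDegree.trans (le_of_eq (by rw [hE2deg])))
          _ = ((d+1+1 : ℕ) : WithBot ℕ) := by rw [zero_add]
      · exact hq₀deg.trans (by exact_mod_cast WithBot.coe_le_coe.mpr (by omega))
    · have hq₀c : q₀.coeff (d+2) = 0 := Polynomial.coeff_eq_zero_of_degree_lt
        (lt_of_le_of_lt hq₀deg (by exact_mod_cast Nat.lt_succ_self (d+1)))
      simp only [Polynomial.coeff_add, Polynomial.coeff_C_mul]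
      rw [show d+1+1 = d+2 from rfl, hE2coeff, hq₀c]
      push_cast; ring
    · intro x
      have hdiff : (descPochhammer ℚ (d+2)).eval (x+1)
          = (descPochhammer ℚ (d+2)).eval x + ((d:ℚ)+2) * (descPochhammer ℚ (d+1)).eval x := by
        have h := desc_diff (d+1) x
        have hcast : ((d+1 : ℕ) : ℚ) + 1 = (d:ℚ)+2 := by push_cast; ring
        rw [hcast] at h
        exact h
      have hpr : p.eval x = r.eval x + a * (descPochhammer ℚ (d+1)).eval x := by
        rw [hr]
        simp only [Polynomial.eval_sub, Polynomial.eval_mul, Polynomial.eval_C]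
        ring
      simp only [Polynomial.eval_add, Polynomial.eval_mul, Polynomial.eval_C]
      rw [hq₀, hpr, hdiff]
      have h2 : ((d : ℚ) + 2) ≠ 0 := by positivity
      field_simp
      ring

/-- For every `w`, the function `n ↦ [n, n-w]` (unsigned Stirling numbers of the first kind)
is, for `n ≥ w`, given by a polynomial of degree exactly `2w` (for `w = 0` this degree is `0`). -/
theorem stirling1_sub_isPolynomial (w : ℕ) :
    ∃ Q : Polynomial ℚ, Q.degree = (2 * w : ℕ) ∧
      ∀ n : ℕ, w ≤ n → Q.eval (n : ℚ) = (stirling1 n (n - w) : ℚ) := by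
  induction w with
  | zero =>
    refine ⟨1, by simp, ?_⟩
    intro n _
    simp [stirling1_self n]
  | succ w ih =>
    obtain ⟨Q, hQdeg, hQ⟩ := ih
    have hQne : Q ≠ 0 := by
      intro h
      rw [h, Polynomial.degree_zero] at hQdeg
      exact absurd hQdeg.symm (by rw [Nat.cast_withBot]; exact WithBot.coe_ne_bot)
    set p := Polynomial.X * Q with hp
    have hpdeg : p.degree ≤ ((2*w+1 : ℕ) : WithBot ℕ) := by
      calc p.degree ≤ Polynomial.X.degree + Q.degree := Polynomial.degree_mul_le _ _
        _ = 1 + ((2*w : ℕ) : WithBot ℕ) := by rw [Polynomial.degree_X, hQdeg]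
        _ = ((2*w+1 : ℕ) : WithBot ℕ) := by
            rw [add_comm]; norm_cast
    have hpcoeff : p.coeff (2*w+1) = Q.leadingCoeff := by
      have hnd : Q.natDegree = 2*w := Polynomial.natDegree_eq_of_degree_eq_some hQdeg
      rw [hp, Polynomial.coeff_X_mul, ← hnd]
      rfl
    obtain ⟨q, hqdeg, hqcoeff, hq⟩ := exists_sum_poly (2*w+1) p hpdeg
    have hqc : q.coeff (2*w+2) ≠ 0 := by
      rw [show 2*w+1+1 = 2*w+2 from rfl] at hqcoeff
      rw [hqcoeff, hpcoeff]
      apply div_ne_zero (Polynomial.leadingCoeff_ne_zero.mpr hQne)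
      positivity
    have hqdeg' : q.degree = ((2*w+2 : ℕ) : WithBot ℕ) :=
      le_antisymm (by exact_mod_cast hqdeg) (Polynomial.le_degree_of_ne_zero hqc)
    set c : ℚ := (stirling1 (w+1) 0 : ℚ) - q.eval ((w:ℚ)+1) with hc
    refine ⟨q + Polynomial.C c, ?_, ?_⟩
    · have hlt : (Polynomial.C c).degree < q.degree := by
        apply lt_of_le_of_lt Polynomial.degree_C_le
        rw [hqdeg']
        exact_mod_cast WithBot.coe_lt_coe.mpr (by omega)
      rw [Polynomial.degree_add_eq_left_of_degree_lt hlt, hqdeg']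
      exact_mod_cast congrArg (Nat.cast : ℕ → WithBot ℕ) (by ring : 2*w+2 = 2*(w+1))
    · intro n hn
      induction n, hn using Nat.le_induction with
      | base =>
        simp only [Polynomial.eval_add, Polynomial.eval_C, hc]
        push_cast
        rw [Nat.sub_self]
        ring
      | succ n hn IH =>
        have hev : (q + Polynomial.C c).eval ((n:ℚ)+1)
            = (q + Polynomial.C c).eval (n:ℚ) + p.eval (n:ℚ) := by
          simp only [Polynomial.eval_add, Polynomial.eval_C]
          rw [hq]; ring
        have hpn : p.eval (n:ℚ) = (n:ℚ) * (stirling1 n (n-w) : ℚ) := by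
          rw [hp]
          simp only [Polynomial.eval_mul, Polynomial.eval_X]
          rw [hQ n (by omega)]
        have hsub : n - w = (n - (w+1)) + 1 := by omega
        have hrec := stirling1_succ n (n - (w+1))
        rw [← hsub] at hrec
        have hsub2 : n + 1 - (w+1) = n - w := by omega
        push_cast
        rw [hev, IH, hpn, hrec]
        push_cast
        ring
end

section
/- The weighted-configuration identity holds for g = 7 and w = 1: for any set S of 7 distinct real numbers, the sum over all weighted configurations of S with total weight 1 of their evaluations is zero. -/
open Finset Polynomial

/-- `IsStirlingPoly P` says that for every `w`, `P w` is the (unique) real polynomial of degree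
at most `2w` with `(P w).eval n = [n, n-w]` (unsigned Stirling number of the first kind) for
every integer `n ≥ w`; i.e. `P w` plays the role of `P_w` from the paper. -/
def IsStirlingPoly (P : ℕ → Polynomial ℝ) : Prop :=
  ∀ w : ℕ, (P w).natDegree ≤ 2 * w ∧
    ∀ n : ℕ, w ≤ n → (P w).eval (n : ℝ) = (stirling1 n (n - w) : ℝ)

open scoped Classical in
/-- The sum, over all weighted configurations of the finite set `S` with total weight `w`, of
their evaluations.  A weighted configuration is recorded as a length `r` together with an
`r`-tuple `f`, where `(f i).1 = Sᵢ` are the (nonempty, pairwise disjoint, covering `S`) parts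
of the configuration and `(f i).2 = wᵢ` are their weights, `∑ i, wᵢ = w`.  Its evaluation is
`(-1)^r · (1/r) · ∏ i, P_{wᵢ}(tᵢ)` where `tᵢ = ∑ c ∈ Sᵢ, c`.  (Since the parts are nonempty and
pairwise disjoint, `r ≤ S.card`, and each weight is at most `w`, so every weighted
configuration occurs exactly once in the sum below.) -/
noncomputable def weightedConfigSum (P : ℕ → Polynomial ℝ) (S : Finset ℝ) (w : ℕ) : ℝ :=
  ∑ r ∈ Finset.range (S.card + 1),
    ∑ f ∈ (Fintype.piFinset fun _ : Fin r => S.powerset ×ˢ Finset.range (w + 1)).filter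
        (fun f => (∀ i, ((f i).1).Nonempty) ∧
          (∀ i j, i ≠ j → Disjoint (f i).1 (f j).1) ∧
          (Finset.univ.biUnion fun i => (f i).1) = S ∧
          ∑ i, (f i).2 = w),
      (-1 : ℝ) ^ r * (1 / (r : ℝ)) * ∏ i, (P (f i).2).eval (∑ c ∈ (f i).1, c)

lemma P0_eval (P : ℕ → Polynomial ℝ) (hP : IsStirlingPoly P) (x : ℝ) :
    (P 0).eval x = 1 := by
  obtain ⟨hd, he⟩ := hP 0
  have h0 := he 0 le_rfl
  have hC : P 0 = C ((P 0).coeff 0) := eq_C_of_natDegree_le_zero (by simpa using hd)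
  rw [hC] at h0 ⊢
  simp only [eval_C] at h0 ⊢
  rw [h0]
  norm_num [stirling1]

lemma P1_eval (P : ℕ → Polynomial ℝ) (hP : IsStirlingPoly P) (x : ℝ) :
    (P 1).eval x = (x ^ 2 - x) / 2 := by
  obtain ⟨hd, he⟩ := hP 1
  set q : Polynomial ℝ := C (2⁻¹) * (X ^ 2 - X) with hq
  have hs3 : stirling1 3 2 = 3 := by
    have : (ascPochhammer ℕ 3) = X ^ 3 + 3 * X ^ 2 + 2 * X := by
      simp [ascPochhammer_succ_right, ascPochhammer_one]; ring
    simp [stirling1, this, coeff_add, coeff_X]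
  have hs2 : stirling1 2 1 = 1 := by
    simp [stirling1, ascPochhammer_succ_right, ascPochhammer_one]
  have hs1 : stirling1 1 0 = 0 := by
    simp [stirling1, ascPochhammer_one]
  have hqd : q.natDegree ≤ 2 := by
    refine (natDegree_C_mul_le _ _).trans ?_
    refine (natDegree_sub_le _ _).trans ?_
    simp
  have hz : P 1 - q = 0 := by
    apply eq_zero_of_natDegree_lt_card_of_eval_eq_zero (f := fun i : Fin 3 => ((i : ℕ) + 1 : ℝ))
    · intro a b hab
      simp only at hab
      have : (a : ℕ) = (b : ℕ) := by exact_mod_cast (by linarith : ((a:ℕ):ℝ) = (b:ℕ))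
      exact Fin.ext this
    · intro i
      fin_cases i <;>
        simp only [eval_sub, hq, eval_mul, eval_C, eval_sub, eval_pow, eval_X] <;>
        [ (have := he 1 le_rfl); (have := he 2 (by norm_num)); (have := he 3 (by norm_num))] <;>
        · norm_num [hs1, hs2, hs3] at this ⊢
          try rw [show ((1:ℕ):ℝ) = 1 by norm_num] at *
          try rw [show ((2:ℕ):ℝ) = 2 by norm_num] at *
          try rw [show ((3:ℕ):ℝ) = 3 by norm_num] at *
          linarith
    · have h2 : (P 1 - q).natDegree ≤ 2 := (natDegree_sub_le _ _).trans (by simp [hqd]; omega)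
      simpa using lt_of_le_of_lt h2 (by simp)
  have : P 1 = q := by linear_combination (norm := ring_nf) hz
  rw [this, hq]
  simp
  ring

open scoped Classical in
noncomputable def OrdPart (S : Finset ℝ) (r : ℕ) : Finset (Fin r → Finset ℝ) :=
  (Fintype.piFinset fun _ : Fin r => S.powerset).filter
    (fun g => (∀ i, (g i).Nonempty) ∧ (∀ i j, i ≠ j → Disjoint (g i) (g j)) ∧
      (Finset.univ.biUnion fun i => g i) = S)

lemma mem_OrdPart {S : Finset ℝ} {r : ℕ} {g : Fin r → Finset ℝ} :
    g ∈ OrdPart S r ↔ (∀ i, (g i).Nonempty) ∧ (∀ i j, i ≠ j → Disjoint (g i) (g j)) ∧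
      (Finset.univ.biUnion fun i => g i) = S := by
  classical
  constructor
  · intro h
    exact (Finset.mem_filter.mp h).2
  · intro h
    refine Finset.mem_filter.mpr ⟨?_, h⟩
    rw [Fintype.mem_piFinset]
    intro i
    rw [Finset.mem_powerset, ← h.2.2]
    exact Finset.subset_biUnion_of_mem _ (Finset.mem_univ i)

lemma OrdPart_comp {S : Finset ℝ} {r : ℕ} {g : Fin r → Finset ℝ} (σ : Equiv.Perm (Fin r))
    (hg : g ∈ OrdPart S r) : (g ∘ σ) ∈ OrdPart S r := by
  rw [mem_OrdPart] at hg ⊢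
  obtain ⟨h1, h2, h3⟩ := hg
  refine ⟨fun i => h1 _, fun i j hij => h2 _ _ (fun h => hij (σ.injective h)), ?_⟩
  rw [← h3]
  ext x
  simp only [Finset.mem_biUnion, Finset.mem_univ, true_and, Function.comp_apply]
  exact ⟨fun ⟨i, hi⟩ => ⟨σ i, hi⟩, fun ⟨i, hi⟩ => ⟨σ.symm i, by simpa using hi⟩⟩

lemma OrdPart_cons {S T : Finset ℝ} (hTS : T ⊆ S) (hTne : T.Nonempty) {k : ℕ}
    {g : Fin k → Finset ℝ} (hg : g ∈ OrdPart (S \ T) k) :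
    Fin.cons T g ∈ OrdPart S (k + 1) := by
  rw [mem_OrdPart] at hg ⊢
  obtain ⟨h1, h2, h3⟩ := hg
  have hdisj : ∀ i, Disjoint T (g i) := by
    intro i
    have : g i ⊆ S \ T := by rw [← h3]; exact Finset.subset_biUnion_of_mem _ (Finset.mem_univ i)
    exact Finset.disjoint_left.mpr fun a haT hag => (Finset.mem_sdiff.mp (this hag)).2 haT
  refine ⟨?_, ?_, ?_⟩
  · intro i
    refine Fin.cases ?_ ?_ i
    · simpa using hTne
    · intro j; simpa using h1 j
  · intro i j hij
    rcases Fin.eq_zero_or_eq_succ i with rfl | ⟨i', rfl⟩ <;>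
      rcases Fin.eq_zero_or_eq_succ j with rfl | ⟨j', rfl⟩
    · exact absurd rfl hij
    · simpa using hdisj j'
    · simpa using (hdisj i').symm
    · simp only [Fin.cons_succ]
      exact h2 i' j' fun h => hij (by rw [h])
  · ext x
    simp only [Finset.mem_biUnion, Finset.mem_univ, true_and]
    constructor
    · rintro ⟨i, hi⟩
      refine Fin.cases ?_ ?_ i hi
      · intro h; exact hTS (by simpa using h)
      · intro j hj
        simp only [Fin.cons_succ] at hj
        have : x ∈ S \ T := by rw [← h3]; exact Finset.mem_biUnion.mpr ⟨j, Finset.mem_univ j, hj⟩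
        exact (Finset.mem_sdiff.mp this).1
    · intro hx
      by_cases hxT : x ∈ T
      · exact ⟨0, by simpa using hxT⟩
      · have : x ∈ S \ T := Finset.mem_sdiff.mpr ⟨hx, hxT⟩
        rw [← h3] at this
        obtain ⟨j, _, hj⟩ := Finset.mem_biUnion.mp this
        exact ⟨j.succ, by simpa using hj⟩

lemma OrdPart_tail {S : Finset ℝ} {k : ℕ} {g : Fin (k + 1) → Finset ℝ}
    (hg : g ∈ OrdPart S (k + 1)) :
    g 0 ⊆ S ∧ (g 0).Nonempty ∧ Fin.tail g ∈ OrdPart (S \ g 0) k := by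
  rw [mem_OrdPart] at hg
  obtain ⟨h1, h2, h3⟩ := hg
  have hsub : ∀ i, g i ⊆ S := by
    intro i; rw [← h3]; exact Finset.subset_biUnion_of_mem _ (Finset.mem_univ i)
  refine ⟨hsub 0, h1 0, ?_⟩
  rw [mem_OrdPart]
  refine ⟨fun i => h1 _, fun i j hij => h2 _ _ (fun h => hij (Fin.succ_injective _ h)), ?_⟩
  ext x
  simp only [Finset.mem_biUnion, Finset.mem_univ, true_and, Fin.tail, Finset.mem_sdiff]
  constructor
  · rintro ⟨i, hi⟩
    refine ⟨hsub _ hi, fun hx0 => ?_⟩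
    exact Finset.disjoint_left.mp (h2 0 i.succ (Fin.succ_ne_zero i).symm) hx0 hi
  · rintro ⟨hxS, hx0⟩
    rw [← h3] at hxS
    obtain ⟨j, _, hj⟩ := Finset.mem_biUnion.mp hxS
    rcases Fin.eq_zero_or_eq_succ j with rfl | ⟨j', rfl⟩
    · exact absurd hj hx0
    · exact ⟨j', hj⟩

lemma OrdPart_peel {S : Finset ℝ} {k : ℕ} (F : (Fin (k + 1) → Finset ℝ) → ℝ) :
    ∑ g ∈ OrdPart S (k + 1), F g =
      ∑ T ∈ S.powerset.filter Finset.Nonempty, ∑ g ∈ OrdPart (S \ T) k, F (Fin.cons T g) := by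
  classical
  rw [Finset.sum_sigma']
  refine Finset.sum_nbij' (fun g => ⟨g 0, Fin.tail g⟩) (fun p => Fin.cons p.1 p.2) ?_ ?_ ?_ ?_ ?_
  · intro g hg
    obtain ⟨hsub, hne, htail⟩ := OrdPart_tail hg
    exact Finset.mem_sigma.mpr ⟨Finset.mem_filter.mpr ⟨Finset.mem_powerset.mpr hsub, hne⟩, htail⟩
  · intro p hp
    rw [Finset.mem_sigma, Finset.mem_filter, Finset.mem_powerset] at hp
    exact OrdPart_cons hp.1.1 hp.1.2 hp.2
  · intro g _; exact Fin.cons_self_tail g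
  · rintro ⟨T, g⟩ _
    simp
  · intro g _; rw [Fin.cons_self_tail]

lemma OrdPart_empty_zero : (OrdPart ∅ 0).card = 1 := by
  classical
  rw [Finset.card_eq_one]
  refine ⟨fun i => i.elim0, ?_⟩
  ext g
  simp only [Finset.mem_singleton, mem_OrdPart]
  constructor
  · intro _; exact funext fun i => i.elim0
  · rintro rfl
    refine ⟨fun i => i.elim0, fun i => i.elim0, ?_⟩
    simp

lemma OrdPart_empty_succ (k : ℕ) : OrdPart (∅ : Finset ℝ) (k + 1) = ∅ := by
  refine Finset.eq_empty_of_forall_notMem fun g hg => ?_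
  rw [mem_OrdPart] at hg
  obtain ⟨h1, _, h3⟩ := hg
  have : g 0 ⊆ ∅ := by rw [← h3]; exact Finset.subset_biUnion_of_mem _ (Finset.mem_univ 0)
  obtain ⟨a, ha⟩ := h1 0
  exact absurd (this ha) (by simp)

lemma OrdPart_zero_of_nonempty {M : Finset ℝ} (h : M.Nonempty) : OrdPart M 0 = ∅ := by
  refine Finset.eq_empty_of_forall_notMem fun g hg => ?_
  rw [mem_OrdPart] at hg
  have := hg.2.2
  simp only [Finset.univ_eq_empty, Finset.biUnion_empty] at this
  exact absurd this.symm (Finset.nonempty_iff_ne_empty.mp h)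

lemma filter_not_nonempty (M : Finset ℝ) :
    M.powerset.filter (fun T => ¬ T.Nonempty) = {∅} := by
  ext T
  simp [Finset.not_nonempty_iff_eq_empty]
  rintro rfl
  simp

lemma OrdPart_alt : ∀ (M : Finset ℝ) (n : ℕ), M.card < n →
    ∑ k ∈ Finset.range n, (-1 : ℝ) ^ k * ((OrdPart M k).card : ℝ) = (-1) ^ M.card := by
  classical
  intro M
  induction M using Finset.strongInduction with
  | _ M ih =>
    intro n hn
    by_cases hM : M = ∅
    · subst hM
      obtain ⟨n', rfl⟩ : ∃ n', n = n' + 1 := ⟨n - 1, by omega⟩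
      rw [Finset.sum_range_succ']
      have h1 : ∀ k ∈ Finset.range n', (-1 : ℝ) ^ (k + 1) * ((OrdPart ∅ (k + 1)).card : ℝ) = 0 := by
        intro k _; simp [OrdPart_empty_succ]
      rw [Finset.sum_congr rfl h1]
      simp [OrdPart_empty_zero]
    · have hMne : M.Nonempty := Finset.nonempty_iff_ne_empty.mpr hM
      obtain ⟨n', rfl⟩ : ∃ n', n = n' + 1 := ⟨n - 1, by omega⟩
      rw [Finset.sum_range_succ']
      rw [OrdPart_zero_of_nonempty hMne]
      simp only [Finset.card_empty, Nat.cast_zero, mul_zero, add_zero]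
      have hpeel : ∀ k, ((OrdPart M (k + 1)).card : ℝ) =
          ∑ T ∈ M.powerset.filter Finset.Nonempty, ((OrdPart (M \ T) k).card : ℝ) := by
        intro k
        have := OrdPart_peel (S := M) (k := k) (fun _ => (1 : ℝ))
        simpa using this
      calc ∑ k ∈ Finset.range n', (-1 : ℝ) ^ (k + 1) * ((OrdPart M (k + 1)).card : ℝ)
          = ∑ k ∈ Finset.range n', ∑ T ∈ M.powerset.filter Finset.Nonempty,
              (-1 : ℝ) ^ (k + 1) * ((OrdPart (M \ T) k).card : ℝ) := by
            refine Finset.sum_congr rfl fun k _ => ?_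
            rw [hpeel k, Finset.mul_sum]
        _ = ∑ T ∈ M.powerset.filter Finset.Nonempty, (-1) *
              ∑ k ∈ Finset.range n', (-1 : ℝ) ^ k * ((OrdPart (M \ T) k).card : ℝ) := by
            rw [Finset.sum_comm]
            refine Finset.sum_congr rfl fun T _ => ?_
            rw [Finset.mul_sum]
            refine Finset.sum_congr rfl fun k _ => ?_
            ring
        _ = ∑ T ∈ M.powerset.filter Finset.Nonempty, (-1) * (-1 : ℝ) ^ (M \ T).card := by
            refine Finset.sum_congr rfl fun T hT => ?_
            rw [Finset.mem_filter, Finset.mem_powerset] at hT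
            have h1 : (M \ T).card < M.card :=
              Finset.card_lt_card (Finset.sdiff_ssubset hT.1 hT.2)
            rw [ih (M \ T) (Finset.sdiff_ssubset hT.1 hT.2) n' (by
              have h1' : (M \ T).card < M.card :=
                Finset.card_lt_card (Finset.sdiff_ssubset hT.1 hT.2)
              exact lt_of_lt_of_le h1' (Nat.lt_succ_iff.mp hn))]
        _ = (-1 : ℝ) ^ M.card := by
            have hsplit := Finset.sum_filter_add_sum_filter_not M.powerset
              (fun T => T.Nonempty) (fun T => (-1 : ℝ) * (-1) ^ (M \ T).card)
            rw [filter_not_nonempty] at hsplit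
            have hall : ∑ T ∈ M.powerset, (-1 : ℝ) * (-1) ^ (M \ T).card = 0 := by
              have hz : ∑ T ∈ M.powerset, ((-1 : ℝ)) ^ (M.card - T.card) = 0 := by
                have := Finset.sum_powerset_neg_one_pow_card_of_nonempty (x := M) hMne
                have hcast : ∑ T ∈ M.powerset, ((-1 : ℝ)) ^ T.card = 0 := by
                  exact_mod_cast congrArg (Int.cast : ℤ → ℝ) this
                calc ∑ T ∈ M.powerset, ((-1 : ℝ)) ^ (M.card - T.card)
                    = ∑ T ∈ M.powerset, ((-1 : ℝ)) ^ M.card * ((-1)) ^ T.card := by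
                      refine Finset.sum_congr rfl fun T hT => ?_
                      rw [Finset.mem_powerset] at hT
                      have hle := Finset.card_le_card hT
                      have ht2 : ((-1 : ℝ)) ^ T.card * (-1) ^ T.card = 1 := by
                        rw [← pow_add]
                        exact Even.neg_one_pow ⟨T.card, rfl⟩
                      calc ((-1 : ℝ)) ^ (M.card - T.card)
                          = ((-1 : ℝ)) ^ (M.card - T.card) * (((-1)) ^ T.card * (-1) ^ T.card) := by
                            rw [ht2, mul_one]
                        _ = (((-1 : ℝ)) ^ (M.card - T.card) * ((-1)) ^ T.card) * (-1) ^ T.card := by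
                            ring
                        _ = ((-1 : ℝ)) ^ M.card * ((-1)) ^ T.card := by
                            rw [← pow_add]
                            congr 2
                            omega
                  _ = 0 := by rw [← Finset.mul_sum, hcast, mul_zero]
              calc ∑ T ∈ M.powerset, (-1 : ℝ) * (-1) ^ (M \ T).card
                  = - ∑ T ∈ M.powerset, ((-1 : ℝ)) ^ (M.card - T.card) := by
                    rw [← Finset.sum_neg_distrib]
                    refine Finset.sum_congr rfl fun T hT => ?_
                    rw [Finset.mem_powerset] at hT
                    rw [Finset.card_sdiff_of_subset hT]
                    ring
                _ = 0 := by rw [hz, neg_zero]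
            have : ∑ T ∈ ({∅} : Finset (Finset ℝ)), (-1 : ℝ) * (-1) ^ (M \ T).card
                = -(-1 : ℝ) ^ M.card := by simp
            linarith [hsplit, hall, this]

lemma OrdPart_symm {S : Finset ℝ} {r : ℕ} (j : Fin (r + 1)) (φ : Finset ℝ → ℝ) :
    ∑ g ∈ OrdPart S (r + 1), φ (g j) = ∑ g ∈ OrdPart S (r + 1), φ (g 0) := by
  classical
  refine Finset.sum_nbij' (fun g => g ∘ Equiv.swap 0 j) (fun g => g ∘ Equiv.swap 0 j)
    (fun g hg => OrdPart_comp _ hg) (fun g hg => OrdPart_comp _ hg) ?_ ?_ ?_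
  · intro g _; funext i; simp [Function.comp, Equiv.swap_apply_self]
  · intro g _; funext i; simp [Function.comp, Equiv.swap_apply_self]
  · intro g _
    simp [Function.comp, Equiv.swap_apply_left]

lemma OrdPart_head {S : Finset ℝ} {k : ℕ} (φ : Finset ℝ → ℝ) :
    ∑ g ∈ OrdPart S (k + 1), φ (g 0) =
      ∑ T ∈ S.powerset.filter Finset.Nonempty, ((OrdPart (S \ T) k).card : ℝ) * φ T := by
  classical
  rw [OrdPart_peel (fun g => φ (g 0))]
  refine Finset.sum_congr rfl fun T _ => ?_
  simp [Finset.sum_const, nsmul_eq_mul]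

lemma weight_sum {P : ℕ → Polynomial ℝ} (hP0 : ∀ x, (P 0).eval x = 1)
    (r : ℕ) (t : Fin r → ℝ) :
    ∑ h ∈ (Fintype.piFinset fun _ : Fin r => Finset.range 2).filter (fun h => ∑ i, h i = 1),
      ∏ i, (P (h i)).eval (t i) = ∑ j : Fin r, (P 1).eval (t j) := by
  classical
  have hset : (Fintype.piFinset fun _ : Fin r => Finset.range 2).filter (fun h => ∑ i, h i = 1)
      = Finset.univ.image (fun j : Fin r => fun i => if i = j then 1 else 0) := by
    ext h
    simp only [Finset.mem_filter, Fintype.mem_piFinset, Finset.mem_range, Finset.mem_image,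
      Finset.mem_univ, true_and]
    constructor
    · rintro ⟨hlt, hsum⟩
      have hle : ∀ i, h i ≤ 1 := fun i => Nat.lt_succ_iff.mp (hlt i)
      have hex : ∃ j, h j = 1 := by
        by_contra hc
        push_neg at hc
        have : ∀ i, h i = 0 := fun i => by have := hle i; have := hc i; omega
        rw [Finset.sum_congr rfl (fun i _ => this i)] at hsum
        simp at hsum
      obtain ⟨j, hj⟩ := hex
      refine ⟨j, ?_⟩
      funext i
      by_cases hij : i = j
      · simp [hij, hj]
      · simp only [hij, if_false]
        have hrest : ∑ i ∈ Finset.univ.erase j, h i = 0 := by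
          have := Finset.add_sum_erase Finset.univ h (Finset.mem_univ j)
          omega
        exact (Finset.sum_eq_zero_iff.mp hrest i (Finset.mem_erase.mpr ⟨hij, Finset.mem_univ i⟩)).symm
    · rintro ⟨j, rfl⟩
      constructor
      · intro i; by_cases hij : i = j <;> simp [hij]
      · simp
  rw [hset, Finset.sum_image ?_]
  · refine Finset.sum_congr rfl fun j _ => ?_
    calc ∏ i, (P (if i = j then 1 else 0)).eval (t i)
        = ∏ i, (if i = j then (P 1).eval (t j) else 1) := by
          refine Finset.prod_congr rfl fun i _ => ?_
          by_cases hij : i = j <;> simp [hij, hP0]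
      _ = (P 1).eval (t j) := by rw [Finset.prod_ite_eq' Finset.univ j (fun _ => (P 1).eval (t j))]; simp
  · intro a _ b _ hab
    by_contra hne
    have := congrFun hab a
    simp [hne] at this

lemma alt_sum_zero {S : Finset ℝ} (h : S.Nonempty) :
    ∑ T ∈ S.powerset, (-1 : ℝ) ^ T.card = 0 := by
  have := Finset.sum_powerset_neg_one_pow_card_of_nonempty (x := S) h
  exact_mod_cast congrArg (Int.cast : ℤ → ℝ) this

lemma alt_sum_one {S : Finset ℝ} (h : 2 ≤ S.card) :
    ∑ T ∈ S.powerset, (-1 : ℝ) ^ T.card * (∑ c ∈ T, c) = 0 := by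
  classical
  obtain ⟨a, ha⟩ : S.Nonempty := Finset.card_pos.mp (by omega)
  have hrep : S = insert a (S.erase a) := (Finset.insert_erase ha).symm
  have hanotin : a ∉ S.erase a := Finset.notMem_erase a S
  have hcard : 1 ≤ (S.erase a).card := by
    rw [Finset.card_erase_of_mem ha]; omega
  rw [hrep, Finset.sum_powerset_insert hanotin]
  have hins : ∀ T ∈ (S.erase a).powerset,
      (-1 : ℝ) ^ (insert a T).card * (∑ c ∈ insert a T, c)
        = -((-1) ^ T.card * ((∑ c ∈ T, c) + a)) := by
    intro T hT
    rw [Finset.mem_powerset] at hT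
    have haT : a ∉ T := fun hc => hanotin (hT hc)
    rw [Finset.card_insert_of_notMem haT, Finset.sum_insert haT]
    ring
  rw [Finset.sum_congr rfl hins]
  have hz := alt_sum_zero (S := S.erase a) (Finset.card_pos.mp (by omega))
  have hterm : ∀ T ∈ (S.erase a).powerset,
      -((-1 : ℝ) ^ T.card * ((∑ c ∈ T, c) + a))
        = -((-1 : ℝ) ^ T.card * (∑ c ∈ T, c)) + (-a) * (-1) ^ T.card := by
    intro T _; ring
  rw [Finset.sum_congr rfl hterm, Finset.sum_add_distrib, Finset.sum_neg_distrib,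
    ← Finset.mul_sum, hz]
  ring

lemma alt_sum_two {S : Finset ℝ} (h : 3 ≤ S.card) :
    ∑ T ∈ S.powerset, (-1 : ℝ) ^ T.card * (∑ c ∈ T, c) ^ 2 = 0 := by
  classical
  obtain ⟨a, ha⟩ : S.Nonempty := Finset.card_pos.mp (by omega)
  have hrep : S = insert a (S.erase a) := (Finset.insert_erase ha).symm
  have hanotin : a ∉ S.erase a := Finset.notMem_erase a S
  have hcard : 2 ≤ (S.erase a).card := by
    rw [Finset.card_erase_of_mem ha]; omega
  rw [hrep, Finset.sum_powerset_insert hanotin]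
  have hins : ∀ T ∈ (S.erase a).powerset,
      (-1 : ℝ) ^ (insert a T).card * (∑ c ∈ insert a T, c) ^ 2
        = -((-1) ^ T.card * ((∑ c ∈ T, c) + a) ^ 2) := by
    intro T hT
    rw [Finset.mem_powerset] at hT
    have haT : a ∉ T := fun hc => hanotin (hT hc)
    rw [Finset.card_insert_of_notMem haT, Finset.sum_insert haT]
    ring
  rw [Finset.sum_congr rfl hins]
  have hz := alt_sum_zero (S := S.erase a) (Finset.card_pos.mp (by omega))
  have h1 := alt_sum_one (S := S.erase a) hcard
  have hterm : ∀ T ∈ (S.erase a).powerset,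
      -((-1 : ℝ) ^ T.card * ((∑ c ∈ T, c) + a) ^ 2)
        = -((-1 : ℝ) ^ T.card * (∑ c ∈ T, c) ^ 2)
          + ((-2 * a) * ((-1 : ℝ) ^ T.card * (∑ c ∈ T, c)) + (-a ^ 2) * (-1) ^ T.card) := by
    intro T _; ring
  rw [Finset.sum_congr rfl hterm, Finset.sum_add_distrib, Finset.sum_neg_distrib,
    Finset.sum_add_distrib, ← Finset.mul_sum, ← Finset.mul_sum, hz, h1]
  ring

open scoped Classical in
lemma inner_reduce (P : ℕ → Polynomial ℝ) (hP0 : ∀ x, (P 0).eval x = 1) (S : Finset ℝ)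
    (r : ℕ) :
    ∑ f ∈ (Fintype.piFinset fun _ : Fin r => S.powerset ×ˢ Finset.range (1 + 1)).filter
        (fun f => (∀ i, ((f i).1).Nonempty) ∧
          (∀ i j, i ≠ j → Disjoint (f i).1 (f j).1) ∧
          (Finset.univ.biUnion fun i => (f i).1) = S ∧
          ∑ i, (f i).2 = 1),
      (-1 : ℝ) ^ r * (1 / (r : ℝ)) * ∏ i, (P (f i).2).eval (∑ c ∈ (f i).1, c)
    = (-1 : ℝ) ^ r * (1 / (r : ℝ)) *
        ∑ g ∈ OrdPart S r, ∑ j : Fin r, (P 1).eval (∑ c ∈ g j, c) := by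
  classical
  have hstep : ∑ f ∈ (Fintype.piFinset fun _ : Fin r => S.powerset ×ˢ Finset.range (1 + 1)).filter
        (fun f => (∀ i, ((f i).1).Nonempty) ∧
          (∀ i j, i ≠ j → Disjoint (f i).1 (f j).1) ∧
          (Finset.univ.biUnion fun i => (f i).1) = S ∧
          ∑ i, (f i).2 = 1),
      (-1 : ℝ) ^ r * (1 / (r : ℝ)) * ∏ i, (P (f i).2).eval (∑ c ∈ (f i).1, c)
      = ∑ p ∈ (OrdPart S r) ×ˢ ((Fintype.piFinset fun _ : Fin r => Finset.range (1 + 1)).filter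
            (fun h => ∑ i, h i = 1)),
          (-1 : ℝ) ^ r * (1 / (r : ℝ)) * ∏ i, (P (p.2 i)).eval (∑ c ∈ p.1 i, c) := by
    refine Finset.sum_nbij' (fun f => (fun i => (f i).1, fun i => (f i).2))
      (fun p => fun i => (p.1 i, p.2 i)) ?_ ?_ ?_ ?_ ?_
    · intro f hf
      rw [Finset.mem_filter, Fintype.mem_piFinset] at hf
      obtain ⟨hmem, h1, h2, h3, h4⟩ := hf
      rw [Finset.mem_product, mem_OrdPart, Finset.mem_filter, Fintype.mem_piFinset]
      exact ⟨⟨h1, h2, h3⟩, fun i => (Finset.mem_product.mp (hmem i)).2, h4⟩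
    · intro p hp
      rw [Finset.mem_product, mem_OrdPart, Finset.mem_filter, Fintype.mem_piFinset] at hp
      obtain ⟨⟨h1, h2, h3⟩, h5, h4⟩ := hp
      rw [Finset.mem_filter, Fintype.mem_piFinset]
      refine ⟨fun i => ?_, h1, h2, h3, h4⟩
      rw [Finset.mem_product]
      refine ⟨?_, h5 i⟩
      rw [Finset.mem_powerset, ← h3]
      exact Finset.subset_biUnion_of_mem _ (Finset.mem_univ i)
    · intro f _; rfl
    · intro p _; rfl
    · intro f _; rfl
  rw [hstep, Finset.sum_product]
  rw [Finset.mul_sum]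
  refine Finset.sum_congr rfl fun g _ => ?_
  rw [← Finset.mul_sum]
  congr 1
  exact weight_sum hP0 r (fun i => ∑ c ∈ g i, c)

theorem weighted_config_identity_g7_w1 (P : ℕ → Polynomial ℝ) (hP : IsStirlingPoly P)
    (S : Finset ℝ) (hS : S.card = 7) :
    weightedConfigSum P S 1 = 0 := by
  classical
  have hP0 := P0_eval P hP
  have hP1 := P1_eval P hP
  have h1 : weightedConfigSum P S 1 = ∑ r ∈ Finset.range (S.card + 1),
      (-1 : ℝ) ^ r * (1 / (r : ℝ)) *
        ∑ g ∈ OrdPart S r, ∑ j : Fin r, (P 1).eval (∑ c ∈ g j, c) := by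
    unfold weightedConfigSum
    exact Finset.sum_congr rfl fun r _ => inner_reduce P hP0 S r
  rw [h1, hS]
  rw [Finset.sum_range_succ']
  have hF0 : (-1 : ℝ) ^ 0 * (1 / ((0 : ℕ) : ℝ)) *
      ∑ g ∈ OrdPart S 0, ∑ j : Fin 0, (P 1).eval (∑ c ∈ g j, c) = 0 := by
    simp
  rw [hF0, add_zero]
  set φ : Finset ℝ → ℝ := fun T => (P 1).eval (∑ c ∈ T, c) with hφ
  have hstep : ∀ ρ : ℕ, (-1 : ℝ) ^ (ρ + 1) * (1 / ((ρ + 1 : ℕ) : ℝ)) *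
      ∑ g ∈ OrdPart S (ρ + 1), ∑ j : Fin (ρ + 1), (P 1).eval (∑ c ∈ g j, c)
      = (-1 : ℝ) ^ (ρ + 1) * ∑ T ∈ S.powerset.filter Finset.Nonempty,
          ((OrdPart (S \ T) ρ).card : ℝ) * φ T := by
    intro ρ
    rw [Finset.sum_comm]
    have hsy : ∀ j : Fin (ρ + 1),
        ∑ g ∈ OrdPart S (ρ + 1), (P 1).eval (∑ c ∈ g j, c)
          = ∑ g ∈ OrdPart S (ρ + 1), φ (g 0) := fun j => OrdPart_symm j φ
    rw [Finset.sum_congr rfl fun j _ => hsy j, Finset.sum_const, Finset.card_univ,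
      Fintype.card_fin, OrdPart_head φ, nsmul_eq_mul]
    have hne : ((ρ + 1 : ℕ) : ℝ) ≠ 0 := by positivity
    rw [one_div, mul_assoc, ← mul_assoc _⁻¹, inv_mul_cancel₀ hne, one_mul]
  rw [Finset.sum_congr rfl fun ρ _ => hstep ρ]
  have hswap : ∑ ρ ∈ Finset.range 7, ((-1 : ℝ) ^ (ρ + 1) *
      ∑ T ∈ S.powerset.filter Finset.Nonempty, ((OrdPart (S \ T) ρ).card : ℝ) * φ T)
      = ∑ T ∈ S.powerset.filter Finset.Nonempty, φ T *
          ∑ ρ ∈ Finset.range 7, (-1 : ℝ) ^ (ρ + 1) * ((OrdPart (S \ T) ρ).card : ℝ) := by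
    calc ∑ ρ ∈ Finset.range 7, ((-1 : ℝ) ^ (ρ + 1) *
        ∑ T ∈ S.powerset.filter Finset.Nonempty, ((OrdPart (S \ T) ρ).card : ℝ) * φ T)
        = ∑ ρ ∈ Finset.range 7, ∑ T ∈ S.powerset.filter Finset.Nonempty,
            (-1 : ℝ) ^ (ρ + 1) * (((OrdPart (S \ T) ρ).card : ℝ) * φ T) :=
          Finset.sum_congr rfl fun ρ _ => Finset.mul_sum _ _ _
      _ = ∑ T ∈ S.powerset.filter Finset.Nonempty, ∑ ρ ∈ Finset.range 7,
            (-1 : ℝ) ^ (ρ + 1) * (((OrdPart (S \ T) ρ).card : ℝ) * φ T) := Finset.sum_comm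
      _ = ∑ T ∈ S.powerset.filter Finset.Nonempty, φ T *
            ∑ ρ ∈ Finset.range 7, (-1 : ℝ) ^ (ρ + 1) * ((OrdPart (S \ T) ρ).card : ℝ) := by
          refine Finset.sum_congr rfl fun T _ => ?_
          rw [Finset.mul_sum]
          exact Finset.sum_congr rfl fun ρ _ => by ring
  rw [hswap]
  have halt : ∀ T ∈ S.powerset.filter Finset.Nonempty,
      φ T * ∑ ρ ∈ Finset.range 7, (-1 : ℝ) ^ (ρ + 1) * ((OrdPart (S \ T) ρ).card : ℝ)
        = (-1 : ℝ) ^ T.card * φ T := by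
    intro T hT
    rw [Finset.mem_filter, Finset.mem_powerset] at hT
    have hTcard : 1 ≤ T.card := Finset.card_pos.mpr hT.2
    have hTle : T.card ≤ 7 := by
      have := Finset.card_le_card hT.1
      omega
    have hsd : (S \ T).card = 7 - T.card := by rw [Finset.card_sdiff_of_subset hT.1, hS]
    have hlt : (S \ T).card < 7 := by omega
    have hsum : ∑ ρ ∈ Finset.range 7, (-1 : ℝ) ^ (ρ + 1) * ((OrdPart (S \ T) ρ).card : ℝ)
        = -(-1 : ℝ) ^ (S \ T).card := by
      calc ∑ ρ ∈ Finset.range 7, (-1 : ℝ) ^ (ρ + 1) * ((OrdPart (S \ T) ρ).card : ℝ)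
          = ∑ ρ ∈ Finset.range 7, -((-1 : ℝ) ^ ρ * ((OrdPart (S \ T) ρ).card : ℝ)) :=
            Finset.sum_congr rfl fun ρ _ => by ring
        _ = -∑ ρ ∈ Finset.range 7, (-1 : ℝ) ^ ρ * ((OrdPart (S \ T) ρ).card : ℝ) :=
            Finset.sum_neg_distrib _
        _ = -(-1 : ℝ) ^ (S \ T).card := by rw [OrdPart_alt (S \ T) 7 hlt]
    rw [hsum, hsd]
    have h2 : (-1 : ℝ) ^ (7 - T.card) * (-1 : ℝ) ^ T.card = -1 := by
      rw [← pow_add, (by omega : 7 - T.card + T.card = 7)]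
      norm_num
    have h3 : (-1 : ℝ) ^ T.card * (-1 : ℝ) ^ T.card = 1 := by
      rw [← pow_add]
      exact Even.neg_one_pow ⟨T.card, rfl⟩
    have h4 : (-1 : ℝ) ^ (7 - T.card) = -(-1 : ℝ) ^ T.card := by
      calc (-1 : ℝ) ^ (7 - T.card)
          = (-1 : ℝ) ^ (7 - T.card) * ((-1 : ℝ) ^ T.card * (-1 : ℝ) ^ T.card) := by
            rw [h3, mul_one]
        _ = ((-1 : ℝ) ^ (7 - T.card) * (-1 : ℝ) ^ T.card) * (-1 : ℝ) ^ T.card := by ring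
        _ = -(-1 : ℝ) ^ T.card := by rw [h2]; ring
    rw [h4]
    ring
  rw [Finset.sum_congr rfl halt]
  have hφempty : φ ∅ = 0 := by
    rw [hφ]
    simp [hP1]
  have hsplit := Finset.sum_filter_add_sum_filter_not S.powerset
    (fun T => T.Nonempty) (fun T => (-1 : ℝ) ^ T.card * φ T)
  rw [filter_not_nonempty] at hsplit
  have hsingle : ∑ T ∈ ({∅} : Finset (Finset ℝ)), (-1 : ℝ) ^ T.card * φ T = 0 := by
    simp [hφempty]
  have hfull : ∑ T ∈ S.powerset, (-1 : ℝ) ^ T.card * φ T = 0 := by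
    have hexp : ∀ T ∈ S.powerset, (-1 : ℝ) ^ T.card * φ T
        = (1 / 2) * ((-1 : ℝ) ^ T.card * (∑ c ∈ T, c) ^ 2)
          - (1 / 2) * ((-1 : ℝ) ^ T.card * (∑ c ∈ T, c)) := by
      intro T _
      rw [hφ]
      simp only [hP1]
      ring
    rw [Finset.sum_congr rfl hexp, Finset.sum_sub_distrib, ← Finset.mul_sum, ← Finset.mul_sum,
      alt_sum_two (by omega), alt_sum_one (by omega)]
    ring
  linarith [hsplit, hsingle, hfull]
end
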